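/- Geometric decay of cell diameters under equiprobable coordinate splits (Lemma 1, stated for an arbitrary equiprobable split sequence): Let μ have density f with 0 < m ≤ f ≤ M on the box B₀, with μ(B₀) > 0. Let s : {1,…,L} → {1,…,d} be a splitting schedule, and let B₀ ⊇ B₁ ⊇ ⋯ ⊇ B_L be axis-aligned boxes such that for each l ∈ {1,…,L}, B_l coincides with B_{l−1} in every coordinate except s(l), in which its interval is a subinterval of the corresponding interval of B_{l−1}, and μ(B_l) = (1/2)·μ(B_{l−1}). Suppose there is a constant c_s > 0 such that #{l ≤ L : s(l) = j} ≥ c_s·L/d for every coordinate j ∈ {1,…,d}. Then, with ρ := 1 − m/(2M) ∈ (0,1), the Euclidean diameter of B_L satisfies diam(B_L) ≤ √d · max_{1≤j≤d}(U_{0,j} − L_{0,j}) · ρ^{c_s L / d}. -/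

import Mathlib

open MeasureTheory Set

set_option maxHeartbeats 1000000 in
/-- Geometric decay of cell diameters under equiprobable coordinate splits (Lemma 1). -/
theorem stmt_0 (d L : ℕ) (hd : 1 ≤ d)
    (a b : ℕ → Fin d → ℝ)
    (B : ℕ → Set (EuclideanSpace ℝ (Fin d)))
    (hB : ∀ l, B l = {u : EuclideanSpace ℝ (Fin d) | ∀ j, u j ∈ Set.Icc (a l j) (b l j)})
    (hab : ∀ j, a 0 j < b 0 j)
    (f : EuclideanSpace ℝ (Fin d) → ℝ) (hf : Measurable f)
    (m M : ℝ) (hm : 0 < m)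
    (hfb : ∀ u ∈ B 0, m ≤ f u ∧ f u ≤ M)
    (μ : Measure (EuclideanSpace ℝ (Fin d)))
    (hμ : μ = volume.withDensity (fun u => ENNReal.ofReal (f u)))
    (hpos : 0 < μ (B 0))
    (s : ℕ → Fin d)
    (hnest : ∀ l, 1 ≤ l → l ≤ L →
      (∀ j, j ≠ s l → a l j = a (l - 1) j ∧ b l j = b (l - 1) j) ∧
      Set.Icc (a l (s l)) (b l (s l)) ⊆ Set.Icc (a (l - 1) (s l)) (b (l - 1) (s l)) ∧
      μ (B l) = μ (B (l - 1)) / 2)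
    (c_s : ℝ) (hc : 0 < c_s)
    (hcount : ∀ j : Fin d,
      c_s * (L : ℝ) / (d : ℝ) ≤
        (((Finset.Icc 1 L).filter (fun l => s l = j)).card : ℝ)) :
    (0 < 1 - m / (2 * M) ∧ 1 - m / (2 * M) < 1) ∧
    Metric.diam (B L) ≤
      Real.sqrt d * (⨆ j : Fin d, (b 0 j - a 0 j)) *
        (1 - m / (2 * M)) ^ (c_s * (L : ℝ) / (d : ℝ)) := by
  have : Fact (1 ≤ d) := ⟨hd⟩
  haveI : Nonempty (Fin d) := Fin.pos_iff_nonempty.mp hd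
  set ρ : ℝ := 1 - m / (2 * M) with hρdef
  clear_value ρ
  -- B 0 nonempty and M positive
  have hB0ne : (B 0).Nonempty := by
    refine ⟨WithLp.toLp 2 (fun j => a 0 j : Fin d → ℝ), ?_⟩
    rw [hB]; intro j; exact ⟨le_refl _, (hab j).le⟩
  have hM : 0 < M := by
    obtain ⟨u, hu⟩ := hB0ne
    exact lt_of_lt_of_le hm ((hfb u hu).1.trans (hfb u hu).2)
  have hmM : m ≤ M := by
    obtain ⟨u, hu⟩ := hB0ne
    exact (hfb u hu).1.trans (hfb u hu).2
  have hρ0 : 0 < ρ := by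
    have : m / (2 * M) < 1 := by
      rw [div_lt_one (by linarith)]; linarith
    simp only [hρdef]; linarith
  have hρ1 : ρ < 1 := by
    have : 0 < m / (2 * M) := div_pos hm (by linarith)
    simp only [hρdef]; linarith
  refine ⟨⟨hρ0, hρ1⟩, ?_⟩
  -- measurability and volume of boxes
  have hmeas : ∀ l, MeasurableSet (B l) := by
    intro l; rw [hB]
    have : {u : EuclideanSpace ℝ (Fin d) | ∀ j, u j ∈ Icc (a l j) (b l j)}
        = ⋂ j, (fun u : EuclideanSpace ℝ (Fin d) => u j) ⁻¹' Icc (a l j) (b l j) := by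
      ext u; simp [Set.mem_iInter]
    rw [this]
    exact MeasurableSet.iInter fun j => ((measurable_pi_apply j).comp (WithLp.measurable_ofLp (p := 2) (X := Fin d → ℝ))) measurableSet_Icc
  have hvol : ∀ l, volume (B l) = ∏ j, ENNReal.ofReal (b l j - a l j) := by
    intro l
    have hEq : B l = ((MeasurableEquiv.toLp 2 (Fin d → ℝ)).symm) ⁻¹'
        (Set.univ.pi fun j => Icc (a l j) (b l j)) := by
      rw [hB]; ext u
      constructor
      · intro h j _; exact h j
      · intro h j; exact h j (Set.mem_univ j)
    rw [hEq, (EuclideanSpace.volume_preserving_symm_measurableEquiv_toLp (Fin d)).measure_preimage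
      ((MeasurableSet.univ_pi fun j => measurableSet_Icc).nullMeasurableSet)]
    rw [volume_pi_pi]
    simp [Real.volume_Icc]
  -- μ sandwiched by volumes
  have hμub : ∀ S : Set (EuclideanSpace ℝ (Fin d)), MeasurableSet S → S ⊆ B 0 →
      μ S ≤ ENNReal.ofReal M * volume S := by
    intro S hS hSsub
    rw [hμ, withDensity_apply _ hS]
    calc ∫⁻ u in S, ENNReal.ofReal (f u) ∂volume
        ≤ ∫⁻ _ in S, ENNReal.ofReal M ∂volume := by
          refine setLIntegral_mono (by measurability) fun u hu => ?_
          exact ENNReal.ofReal_le_ofReal (hfb u (hSsub hu)).2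
      _ = ENNReal.ofReal M * volume S := by rw [setLIntegral_const]
  have hμlb : ∀ S : Set (EuclideanSpace ℝ (Fin d)), MeasurableSet S → S ⊆ B 0 →
      ENNReal.ofReal m * volume S ≤ μ S := by
    intro S hS hSsub
    rw [hμ, withDensity_apply _ hS]
    calc ENNReal.ofReal m * volume S = ∫⁻ _ in S, ENNReal.ofReal m ∂volume := by
          rw [setLIntegral_const]
      _ ≤ ∫⁻ u in S, ENNReal.ofReal (f u) ∂volume := by
          refine setLIntegral_mono (hf.ennreal_ofReal) fun u hu => ?_
          exact ENNReal.ofReal_le_ofReal (hfb u (hSsub hu)).1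
  have hvol0fin : volume (B 0) ≠ ⊤ := by
    rw [hvol 0]
    exact ENNReal.prod_ne_top fun j _ => ENNReal.ofReal_ne_top
  have hfin0 : μ (B 0) ≠ ⊤ := by
    refine ne_top_of_le_ne_top ?_ (hμub _ (hmeas 0) (subset_refl _))
    exact ENNReal.mul_ne_top ENNReal.ofReal_ne_top hvol0fin
  -- counting function
  set N : Fin d → ℕ → ℕ := fun j l => ((Finset.Icc 1 l).filter (fun k => s k = j)).card with hN
  -- main induction
  have key : ∀ l, l ≤ L → B l ⊆ B 0 ∧ 0 < μ (B l) ∧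
      (∀ j, 0 < b l j - a l j) ∧
      (∀ j, b l j - a l j ≤ ρ ^ (N j l) * (b 0 j - a 0 j)) := by
    intro l
    induction l with
    | zero =>
      intro _
      refine ⟨subset_refl _, hpos, fun j => by linarith [hab j], fun j => ?_⟩
      simp [hN]
    | succ n ih =>
      intro hlL
      obtain ⟨hsub0, hμpos, hside, hbound⟩ := ih (le_trans (Nat.le_succ n) hlL)
      obtain ⟨hcoord, hsubI, hhalf⟩ := hnest (n + 1) (Nat.le_add_left 1 n) hlL
      simp only [Nat.add_sub_cancel] at hcoord hsubI hhalf
      set j0 := s (n + 1) with hj0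
      -- interval containment for every coordinate
      have hIcc : ∀ j, Icc (a (n+1) j) (b (n+1) j) ⊆ Icc (a n j) (b n j) := by
        intro j
        by_cases hj : j = j0
        · rw [hj]; exact hsubI
        · rw [(hcoord j hj).1, (hcoord j hj).2]
      have hsubn : B (n+1) ⊆ B n := by
        rw [hB, hB]; intro u hu j; exact hIcc j (hu j)
      have hsub0' : B (n+1) ⊆ B 0 := hsubn.trans hsub0
      have hμpos' : 0 < μ (B (n+1)) := by
        rw [hhalf]
        exact ENNReal.div_pos (ne_of_gt hμpos) (by norm_num)
      -- positivity of sides at level n+1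
      have hside' : ∀ j, 0 < b (n+1) j - a (n+1) j := by
        have h1 : 0 < volume (B (n+1)) := by
          rcases eq_or_ne (volume (B (n+1))) 0 with h | h
          · exfalso
            have h3 := hμub _ (hmeas (n+1)) hsub0'
            rw [h, mul_zero] at h3
            exact absurd (le_antisymm h3 zero_le) (ne_of_gt hμpos')
          · exact pos_iff_ne_zero.mpr h
        rw [hvol (n+1)] at h1
        intro j
        have hne : ∀ k ∈ Finset.univ, ENNReal.ofReal (b (n+1) k - a (n+1) k) ≠ 0 := by
          intro k _
          intro h0
          rw [Finset.prod_eq_zero (Finset.mem_univ k) h0] at h1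
          exact lt_irrefl _ h1
        have := hne j (Finset.mem_univ j)
        rwa [← bot_eq_zero, ← bot_lt_iff_ne_bot, bot_eq_zero, ENNReal.ofReal_pos] at this
      -- side lengths nonneg at level n (strict) already hside
      -- real volumes
      set V : ℝ := ∏ j, (b n j - a n j) with hV
      set V' : ℝ := ∏ j, (b (n+1) j - a (n+1) j) with hV'
      have hVpos : 0 < V := Finset.prod_pos fun j _ => hside j
      have hV'pos : 0 < V' := Finset.prod_pos fun j _ => hside' j
      have hvolr : (volume (B n)).toReal = V := by
        rw [hvol n, ← ENNReal.ofReal_prod_of_nonneg (fun j _ => (hside j).le),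
          ENNReal.toReal_ofReal hVpos.le]
      have hvolr' : (volume (B (n+1))).toReal = V' := by
        rw [hvol (n+1), ← ENNReal.ofReal_prod_of_nonneg (fun j _ => (hside' j).le),
          ENNReal.toReal_ofReal hV'pos.le]
      have hvoln_fin : volume (B n) ≠ ⊤ := by
        rw [hvol n]; exact ENNReal.prod_ne_top fun j _ => ENNReal.ofReal_ne_top
      have hvoln1_fin : volume (B (n+1)) ≠ ⊤ := by
        rw [hvol (n+1)]; exact ENNReal.prod_ne_top fun j _ => ENNReal.ofReal_ne_top
      have hμn_fin : μ (B n) ≠ ⊤ :=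
        ne_top_of_le_ne_top hfin0 (measure_mono hsub0)
      have hμn1_fin : μ (B (n+1)) ≠ ⊤ :=
        ne_top_of_le_ne_top hfin0 (measure_mono hsub0')
      -- real measure values
      set x : ℝ := (μ (B n)).toReal with hx
      have hxV : x ≤ M * V := by
        have := hμub _ (hmeas n) hsub0
        have h2 := ENNReal.toReal_mono (ENNReal.mul_ne_top ENNReal.ofReal_ne_top hvoln_fin) this
        rwa [ENNReal.toReal_mul, ENNReal.toReal_ofReal hM.le, hvolr] at h2
      have hxVlb : m * V ≤ x := by
        have := hμlb _ (hmeas n) hsub0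
        have h2 := ENNReal.toReal_mono hμn_fin this
        rwa [ENNReal.toReal_mul, ENNReal.toReal_ofReal hm.le, hvolr] at h2
      have hxhalf : (μ (B (n+1))).toReal = x / 2 := by
        rw [hhalf, ENNReal.toReal_div]
        norm_num
        exact hx.symm
      -- measure of the difference
      have hdiff : μ (B n \ B (n+1)) = μ (B n) - μ (B (n+1)) :=
        measure_diff hsubn (hmeas (n+1)).nullMeasurableSet hμn1_fin
      have hvdiff : volume (B n \ B (n+1)) = volume (B n) - volume (B (n+1)) :=
        measure_diff hsubn (hmeas (n+1)).nullMeasurableSet hvoln1_fin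
      have hdiffub : (μ (B n \ B (n+1))).toReal ≤ M * (V - V') := by
        have hle := hμub _ ((hmeas n).diff (hmeas (n+1))) ((Set.diff_subset).trans hsub0)
        have hfin : volume (B n \ B (n+1)) ≠ ⊤ :=
          ne_top_of_le_ne_top hvoln_fin (measure_mono Set.diff_subset)
        have h2 := ENNReal.toReal_mono (ENNReal.mul_ne_top ENNReal.ofReal_ne_top hfin) hle
        rw [ENNReal.toReal_mul, ENNReal.toReal_ofReal hM.le] at h2
        refine h2.trans ?_
        rw [hvdiff, ENNReal.toReal_sub_of_le (measure_mono hsubn) hvoln_fin, hvolr, hvolr']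
      have hdiffval : (μ (B n \ B (n+1))).toReal = x / 2 := by
        rw [hdiff, ENNReal.toReal_sub_of_le (measure_mono hsubn) hμn_fin, hxhalf]
        ring
      -- key inequality on coordinate j0
      have hkey : b (n+1) j0 - a (n+1) j0 ≤ ρ * (b n j0 - a n j0) := by
        set P : ℝ := ∏ k ∈ Finset.univ.erase j0, (b n k - a n k) with hP
        have hPpos : 0 < P := Finset.prod_pos fun k _ => hside k
        have hVsplit : V = (b n j0 - a n j0) * P := by
          rw [hV, ← Finset.mul_prod_erase Finset.univ _ (Finset.mem_univ j0)]
        have hV'split : V' = (b (n+1) j0 - a (n+1) j0) * P := by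
          rw [hV', ← Finset.mul_prod_erase Finset.univ _ (Finset.mem_univ j0)]
          congr 1
          exact Finset.prod_congr rfl fun k hk => by
            rw [((hcoord k (Finset.mem_erase.mp hk).1).1), ((hcoord k (Finset.mem_erase.mp hk).1).2)]
        -- m * V / 2 ≤ x / 2 ≤ M * (V - V')
        have h1 : m * V / 2 ≤ M * (V - V') := by
          have := hdiffval ▸ hdiffub
          linarith
        set w : ℝ := b n j0 - a n j0 with hwdef
        set w' : ℝ := b (n+1) j0 - a (n+1) j0
        rw [hVsplit, hV'split] at h1
        have hw : 0 < w := hside j0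
        clear_value P w w'
        -- from m*w*P/2 ≤ M*(w - w')*P deduce w' ≤ ρ w
        have h2 : m * w / 2 ≤ M * (w - w') := by
          have := (mul_le_mul_iff_of_pos_right hPpos).mp (by nlinarith : (m * w / 2) * P ≤ (M * (w - w')) * P)
          linarith
        have hexp : M * w * ρ = M * w - m * w / 2 := by
          simp only [hρdef]
          field_simp
        have h3 : M * w' ≤ M * (w * ρ) := by rw [← mul_assoc]; linarith
        have h4 := (mul_le_mul_iff_of_pos_left hM).mp h3
        nlinarith
      -- counting update
      have hNsucc : ∀ j, N j (n+1) = N j n + (if s (n+1) = j then 1 else 0) := by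
        intro j
        simp only [hN]
        have : Finset.Icc 1 (n+1) = insert (n+1) (Finset.Icc 1 n) := by
          ext k; simp only [Finset.mem_insert, Finset.mem_Icc]; omega
        rw [this, Finset.filter_insert]
        by_cases hj : s (n+1) = j
        · rw [if_pos hj, if_pos hj, Finset.card_insert_of_notMem (by simp)]
        · rw [if_neg hj, if_neg hj, add_zero]
      refine ⟨hsub0', hμpos', hside', fun j => ?_⟩
      by_cases hj : j = j0
      · rw [hj, hNsucc j0, if_pos hj0.symm, pow_succ]
        calc b (n+1) j0 - a (n+1) j0 ≤ ρ * (b n j0 - a n j0) := hkey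
          _ ≤ ρ * (ρ ^ (N j0 n) * (b 0 j0 - a 0 j0)) :=
              mul_le_mul_of_nonneg_left (hbound j0) hρ0.le
          _ = ρ ^ (N j0 n) * ρ * (b 0 j0 - a 0 j0) := by ring
      · rw [hNsucc j, if_neg (fun h => hj h.symm), add_zero,
          (hcoord j (fun h => hj (h ▸ rfl))).1, (hcoord j (fun h => hj (h ▸ rfl))).2]
        exact hbound j
  obtain ⟨hsubL, hμposL, hsideL, hboundL⟩ := key L le_rfl
  -- final diameter bound
  set S : ℝ := ⨆ j : Fin d, (b 0 j - a 0 j) with hS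
  have hSb : ∀ j, b 0 j - a 0 j ≤ S := by
    intro j
    rw [hS]
    exact le_ciSup (Set.Finite.bddAbove (Set.finite_range fun j => b 0 j - a 0 j)) j
  have hSpos : 0 < S := lt_of_lt_of_le (by linarith [hab (Classical.arbitrary (Fin d))])
    (hSb (Classical.arbitrary (Fin d)))
  set e : ℝ := c_s * (L : ℝ) / (d : ℝ) with he
  have hepos : 0 < ρ ^ e := Real.rpow_pos_of_pos hρ0 e
  have hsideLe : ∀ j, b L j - a L j ≤ ρ ^ e * S := by
    intro j
    calc b L j - a L j ≤ ρ ^ (N j L) * (b 0 j - a 0 j) := hboundL j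
      _ ≤ ρ ^ e * S := by
        apply mul_le_mul _ (hSb j) (by linarith [hab j, hSb j]) hepos.le
        rw [← Real.rpow_natCast ρ (N j L)]
        exact Real.rpow_le_rpow_of_exponent_ge hρ0 hρ1.le (hcount j)
  have ht : 0 ≤ ρ ^ e * S := le_of_lt (mul_pos hepos hSpos)
  rw [show Real.sqrt d * S * ρ ^ e = Real.sqrt d * (ρ ^ e * S) by ring]
  apply Metric.diam_le_of_forall_dist_le (mul_nonneg (Real.sqrt_nonneg _) ht)
  intro u hu v hv
  rw [hB] at hu hv
  have hcomp : ∀ j, |u j - v j| ≤ ρ ^ e * S := by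
    intro j
    have h1 := hu j
    have h2 := hv j
    rw [Set.mem_Icc] at h1 h2
    rw [abs_le]
    constructor
    · linarith [hsideLe j]
    · linarith [hsideLe j]
  calc dist u v = Real.sqrt (∑ j, dist (u j) (v j) ^ 2) := EuclideanSpace.dist_eq u v
    _ ≤ Real.sqrt (∑ _j : Fin d, (ρ ^ e * S) ^ 2) := by
        apply Real.sqrt_le_sqrt
        apply Finset.sum_le_sum
        intro j _
        have : dist (u j) (v j) = |u j - v j| := Real.dist_eq _ _
        rw [this]
        exact pow_le_pow_left₀ (abs_nonneg _) (hcomp j) 2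
    _ = Real.sqrt ((d : ℝ) * (ρ ^ e * S) ^ 2) := by
        rw [Finset.sum_const, Finset.card_univ, Fintype.card_fin, nsmul_eq_mul]
    _ = Real.sqrt d * (ρ ^ e * S) := by
        rw [Real.sqrt_mul (Nat.cast_nonneg d), Real.sqrt_sq ht]
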